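/- Let q = p^k with k odd, q ≡ 1 (mod 4), and let s be the maximal size of a set B ⊆ F_q with B - B ⊆ Q ∪ {0}. If ⌊√q⌋ is even then s² + s - 1 ≤ q. -/

import Mathlib

open Finset

section aux
variable {F : Type*} [Field F] [Fintype F] [DecidableEq F]

private lemma key_sum (hF : ringChar F ≠ 2) {a : F} (ha : a ≠ 0) :
    ∑ x : F, quadraticChar F x * quadraticChar F (x + a) = -1 := by
  set χ := quadraticChar F with hχ
  have hJ : ∑ x : F, χ x * χ (1 - x) = -(χ (-1)) := by
    have h := jacobiSum_nontrivial_inv (quadraticChar_ne_one hF)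
    rw [(quadraticChar_isQuadratic F).inv] at h
    simpa only [jacobiSum] using h
  have h1 : ∑ x : F, χ x * χ (x + 1) = -1 := by
    have e : ∑ x : F, χ (-x) * χ (-x + 1) = ∑ x : F, χ x * χ (x + 1) :=
      Equiv.sum_comp (Equiv.neg F) (fun x => χ x * χ (x + 1))
    have e2 : ∑ x : F, χ (-x) * χ (-x + 1) = χ (-1) * ∑ x : F, χ x * χ (1 - x) := by
      rw [Finset.mul_sum]
      refine Finset.sum_congr rfl fun x _ => ?_
      rw [show (-x : F) = -1 * x by ring, show (-1 * x + 1 : F) = 1 - x by ring, map_mul]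
      ring
    have hm : χ (-1) * χ (-1) = 1 := by
      have := quadraticChar_sq_one (neg_ne_zero.mpr (one_ne_zero (α := F)))
      rwa [sq] at this
    rw [← e, e2, hJ]
    calc χ (-1) * -χ (-1) = -(χ (-1) * χ (-1)) := by ring
    _ = -1 := by rw [hm]
  calc ∑ x : F, χ x * χ (x + a)
      = ∑ x : F, χ (a * x) * χ (a * x + a) :=
        (Equiv.sum_comp (Equiv.mulLeft₀ a ha) (fun x => χ x * χ (x + a))).symm
    _ = ∑ x : F, (χ a * χ a) * (χ x * χ (x + 1)) := by
        refine Finset.sum_congr rfl fun x _ => ?_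
        rw [show a * x + a = a * (x + 1) by ring, map_mul, map_mul]
        ring
    _ = -1 := by
        rw [← Finset.mul_sum, h1]
        have := quadraticChar_sq_one ha
        rw [sq] at this
        rw [this]; ring

private lemma clique_bound (hF : ringChar F ≠ 2) {B : Finset F}
    (hB : ∀ b₁ ∈ B, ∀ b₂ ∈ B, b₁ ≠ b₂ → b₁ - b₂ ≠ 0 ∧ IsSquare (b₁ - b₂))
    (hpos : 0 < B.card) :
    (B.card : ℤ) ^ 2 ≤ Fintype.card F ∧
      (Even B.card → (B.card : ℤ) ^ 2 + B.card - 1 ≤ Fintype.card F) := by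
  set χ := quadraticChar F with hχ
  set q : ℤ := (Fintype.card F : ℤ) with hq
  set s : ℤ := (B.card : ℤ) with hsdef
  set f : F → ℤ := fun x => ∑ b ∈ B, χ (x - b) with hf
  -- nonzero differences and values of χ on them
  have hne : ∀ x : F, x ∉ B → ∀ b ∈ B, x - b ≠ 0 := by
    intro x hx b hb h
    exact hx (by rwa [sub_eq_zero.mp h])
  -- Lemma A
  have hA : ∑ x : F, f x = 0 := by
    rw [hf, Finset.sum_comm]
    refine Finset.sum_eq_zero fun b _ => ?_
    calc ∑ x : F, χ (x - b) = ∑ x : F, χ x := Equiv.sum_comp (Equiv.subRight b) χ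
    _ = 0 := quadraticChar_sum_zero hF
  -- Lemma B
  have hBval : ∀ x ∈ B, f x = s - 1 := by
    intro x hx
    have : f x = χ (x - x) + ∑ b ∈ B.erase x, χ (x - b) := (Finset.add_sum_erase B _ hx).symm
    rw [this, sub_self, MulChar.map_zero, zero_add]
    have : ∑ b ∈ B.erase x, χ (x - b) = ∑ b ∈ B.erase x, 1 := by
      refine Finset.sum_congr rfl fun b hb => ?_
      obtain ⟨hb1, hb2⟩ := Finset.mem_erase.mp hb
      obtain ⟨hne', hsq⟩ := hB x hx b hb2 (Ne.symm hb1)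
      exact (quadraticChar_one_iff_isSquare hne').mpr hsq
    rw [this, Finset.sum_const, nsmul_eq_mul, mul_one, Finset.card_erase_of_mem hx]
    push_cast [Nat.cast_sub (Nat.one_le_iff_ne_zero.mpr hpos.ne')]
    ring
  -- Lemma C : second moment
  have hsq1 : ∑ y : F, χ y ^ 2 = q - 1 := by
    have h0 : ∑ y : F, χ y ^ 2 = χ 0 ^ 2 + ∑ y ∈ Finset.univ.erase 0, χ y ^ 2 :=
      (Finset.add_sum_erase _ _ (Finset.mem_univ (0:F))).symm
    rw [h0, MulChar.map_zero]
    have h1 : ∑ y ∈ Finset.univ.erase (0:F), χ y ^ 2 = ∑ y ∈ Finset.univ.erase (0:F), (1:ℤ) := by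
      refine Finset.sum_congr rfl fun y hy => ?_
      exact quadraticChar_sq_one (Finset.mem_erase.mp hy).1
    rw [h1, Finset.sum_const, nsmul_eq_mul, mul_one,
      Finset.card_erase_of_mem (Finset.mem_univ (0:F)), Finset.card_univ]
    push_cast [Nat.cast_sub (Nat.one_le_iff_ne_zero.mpr Fintype.card_ne_zero)]
    ring
  have hC : ∑ x : F, f x ^ 2 = s * (q - 1) - s * (s - 1) := by
    have expand : ∀ x : F, f x ^ 2 = ∑ b ∈ B, ∑ b' ∈ B, χ (x - b) * χ (x - b') := by
      intro x
      rw [hf, sq, Finset.sum_mul_sum]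
    calc ∑ x : F, f x ^ 2 = ∑ x : F, ∑ b ∈ B, ∑ b' ∈ B, χ (x - b) * χ (x - b') :=
          Finset.sum_congr rfl fun x _ => expand x
      _ = ∑ b ∈ B, ∑ x : F, ∑ b' ∈ B, χ (x - b) * χ (x - b') := Finset.sum_comm
      _ = ∑ b ∈ B, ∑ b' ∈ B, ∑ x : F, χ (x - b) * χ (x - b') :=
          Finset.sum_congr rfl fun b _ => Finset.sum_comm
      _ = ∑ b ∈ B, ((q - 1) + (s - 1) * (-1)) := by
          refine Finset.sum_congr rfl fun b hb => ?_
          have hsplit : ∑ b' ∈ B, ∑ x : F, χ (x - b) * χ (x - b') =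
              (∑ x : F, χ (x - b) * χ (x - b)) +
                ∑ b' ∈ B.erase b, ∑ x : F, χ (x - b) * χ (x - b') :=
            (Finset.add_sum_erase B _ hb).symm
          rw [hsplit]
          have hdiag : ∑ x : F, χ (x - b) * χ (x - b) = q - 1 := by
            have : ∑ x : F, χ (x - b) * χ (x - b) = ∑ x : F, χ x ^ 2 := by
              have := Equiv.sum_comp (Equiv.subRight b) (fun y => χ y ^ 2)
              simpa [sq] using this
            rw [this, hsq1]
          have hoff : ∀ b' ∈ B.erase b, ∑ x : F, χ (x - b) * χ (x - b') = -1 := by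
            intro b' hb'
            have hbb : b - b' ≠ 0 := sub_ne_zero.mpr (Ne.symm (Finset.mem_erase.mp hb').1)
            calc ∑ x : F, χ (x - b) * χ (x - b')
                = ∑ y : F, χ y * χ (y + (b - b')) := by
                  have := Equiv.sum_comp (Equiv.subRight b)
                    (fun y => χ y * χ (y + (b - b')))
                  rw [← this]
                  refine Finset.sum_congr rfl fun x _ => ?_
                  have : (Equiv.subRight b) x = x - b := rfl
                  rw [this, show x - b + (b - b') = x - b' by ring]
              _ = -1 := key_sum hF hbb
          rw [Finset.sum_congr rfl hoff, hdiag, Finset.sum_const, nsmul_eq_mul, mul_neg_one,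
            Finset.card_erase_of_mem hb]
          push_cast [Nat.cast_sub (Nat.one_le_iff_ne_zero.mpr hpos.ne')]
          ring
      _ = s * (q - 1) - s * (s - 1) := by
          rw [Finset.sum_const, nsmul_eq_mul]
          push_cast
          ring
  -- split into B and complement
  have hTsplit := Finset.sum_sdiff (f := f) (Finset.subset_univ B)
  have hSsplit := Finset.sum_sdiff (f := fun x => f x ^ 2) (Finset.subset_univ B)
  have hsumB : ∑ x ∈ B, f x = s * (s - 1) := by
    rw [Finset.sum_congr rfl hBval, Finset.sum_const, nsmul_eq_mul]
    try ring
  have hsumB2 : ∑ x ∈ B, f x ^ 2 = s * (s - 1) ^ 2 := by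
    have : ∀ x ∈ B, f x ^ 2 = (s - 1) ^ 2 := fun x hx => by rw [hBval x hx]
    rw [Finset.sum_congr rfl this, Finset.sum_const, nsmul_eq_mul]
    try ring
  have hT : ∑ x ∈ Finset.univ \ B, f x = -(s * (s - 1)) := by
    have := hTsplit
    rw [hsumB, hA] at this
    linarith
  have hS : ∑ x ∈ Finset.univ \ B, f x ^ 2 = s * (q - 1) - s * (s - 1) - s * (s - 1) ^ 2 := by
    have := hSsplit
    rw [hsumB2, hC] at this
    linarith
  have hs1 : (1 : ℤ) ≤ s := by rw [hsdef]; exact_mod_cast hpos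
  constructor
  · -- general case : q ≥ s^2
    have hpw : ∀ x ∈ Finset.univ \ B, -f x ≤ f x ^ 2 := by
      intro x _
      rcases le_or_gt 0 (f x) with h | h
      · nlinarith
      · have h1 : f x + 1 ≤ 0 := Int.lt_iff_add_one_le.mp h
        nlinarith
    have := Finset.sum_le_sum hpw
    rw [Finset.sum_neg_distrib] at this
    rw [hT, hS] at this
    nlinarith
  · -- parity case
    intro hev
    have hpar : ∀ x ∈ Finset.univ \ B, Even (f x) := by
      intro x hx
      have hxB : x ∉ B := (Finset.mem_sdiff.mp hx).2
      have h1 : f x - s = ∑ b ∈ B, (χ (x - b) - 1) := by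
        rw [hf, Finset.sum_sub_distrib, Finset.sum_const, nsmul_eq_mul, mul_one]
      have h2 : Even (f x - s) := by
        rw [h1]
        have hdvd : (2 : ℤ) ∣ ∑ b ∈ B, (χ (x - b) - 1) := by
          refine Finset.dvd_sum fun b hb => ?_
          rcases quadraticChar_dichotomy (hne x hxB b hb) with h | h <;> rw [h] <;> decide
        obtain ⟨c, hc⟩ := hdvd
        exact ⟨c, by linarith⟩
      have : f x = (f x - s) + s := by ring
      rw [this]
      exact h2.add ((Int.even_coe_nat _).mpr hev)
    have hpw : ∀ x ∈ Finset.univ \ B, -(2 * f x) ≤ f x ^ 2 := by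
      intro x hx
      rcases le_or_gt 0 (f x) with h | h
      · nlinarith
      · have h2 : f x ≤ -2 := by
          rcases hpar x hx with ⟨c, hc⟩
          have hc1 : c + 1 ≤ 0 := Int.lt_iff_add_one_le.mp (by linarith)
          linarith
        nlinarith
    have := Finset.sum_le_sum hpw
    rw [Finset.sum_neg_distrib, ← Finset.mul_sum] at this
    rw [hT, hS] at this
    nlinarith

end aux

private lemma not_square (p k : ℕ) (hp : p.Prime) (hk : Odd k) {t : ℕ} (ht : t * t = p ^ k) :
    False := by
  have hp0 : p ^ k ≠ 0 := pow_ne_zero _ hp.pos.ne'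
  have ht0 : t ≠ 0 := by rintro rfl; simp at ht; omega
  have h := congrArg (fun n => n.factorization p) ht
  simp only [Nat.factorization_mul ht0 ht0, Nat.Prime.factorization_pow hp,
    Finsupp.single_eq_same, Finsupp.coe_add, Pi.add_apply] at h
  obtain ⟨m, hm⟩ := hk
  omega

theorem stmt_10 {F : Type*} [Field F] [Fintype F] (p k s : ℕ)
    (hp : p.Prime) (hk : Odd k) (hcard : Fintype.card F = p ^ k)
    (hq : Fintype.card F % 4 = 1)
    (hs : IsGreatest {n : ℕ | ∃ B : Finset F,
      (∀ b₁ ∈ B, ∀ b₂ ∈ B, b₁ ≠ b₂ → b₁ - b₂ ≠ 0 ∧ IsSquare (b₁ - b₂)) ∧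
      B.card = n} s)
    (heven : Even (Nat.sqrt (Fintype.card F))) :
    (s : ℤ) ^ 2 + s - 1 ≤ (Fintype.card F : ℤ) := by
  classical
  have hchar : ringChar F ≠ 2 := by
    intro h
    have := FiniteField.even_card_of_char_two h
    omega
  obtain ⟨B, hB, hBcard⟩ := hs.1
  subst hBcard
  rcases Nat.eq_zero_or_pos B.card with h0 | hpos
  · rw [h0]
    have : (1 : ℤ) ≤ Fintype.card F := by exact_mod_cast Fintype.card_pos
    push_cast
    linarith
  obtain ⟨hgen, hevcase⟩ := clique_bound hchar hB hpos
  rcases Nat.even_or_odd B.card with hev | hodd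
  · exact hevcase hev
  · set m := Nat.sqrt (Fintype.card F) with hm
    have hne : B.card * B.card ≠ Fintype.card F := by
      intro h
      exact not_square p k hp hk (by rw [h, hcard])
    have hlt : B.card * B.card < Fintype.card F := by
      have : (B.card : ℤ) * B.card ≤ Fintype.card F := by nlinarith
      have h2 : B.card * B.card ≤ Fintype.card F := by exact_mod_cast this
      omega
    have hle : B.card ≤ m := Nat.le_sqrt.mpr hlt.le
    have hnem : B.card ≠ m := by
      intro h
      rw [h] at hodd
      exact (Nat.not_odd_iff_even.mpr heven) hodd
    have hle1 : B.card ≤ m - 1 := by omega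
    have hm2 : m * m ≤ Fintype.card F := by
      have := Nat.sqrt_le' (Fintype.card F); rw [pow_two] at this; exact this
    have hm1 : 1 ≤ m := by omega
    have hle1' : (B.card : ℤ) ≤ (m : ℤ) - 1 := by
      have := Nat.cast_le (α := ℤ).mpr hle1
      push_cast [Nat.cast_sub hm1] at this ⊢
      omega
    have hm2' : (m : ℤ) * m ≤ (Fintype.card F : ℤ) := by exact_mod_cast hm2
    have hB0 : (0 : ℤ) ≤ B.card := by positivity
    nlinarith
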